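/- If Γ ⊂ ℝⁿ is a d-dimensional Ahlfors regular set with d < n−1, then Ω = ℝⁿ \ Γ satisfies the Harnack chain condition: there exist constants C₁, C₂ (depending on C₀, n, d) such that whenever X, Y ∈ Ω satisfy min(δ(X), δ(Y)) ≥ r and |X − Y| ≤ 7 C₁ r, there exist points Z₀ = X, Z₁, …, Z_{C₂} = Y in Ω with |Z_{i+1} − Z_i| ≤ δ(Z_i)/2 for all i, where δ(Z) = dist(Z, Γ). -/

import Mathlib

open MeasureTheory Metric Set
open ENNReal Bornology

set_option maxHeartbeats 1000000

section AuxiliaryLemmas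

variable {n : ℕ}
local notation "E" => EuclideanSpace ℝ (Fin n)

/-- Packing lemma: an `s`-separated finite set in a closed ball of radius `R` in `ℝⁿ`
has cardinality at most `((R+s)/(s/2))^n`, via volume counting. -/
lemma packing_lemma (x : E) {R s : ℝ} (hR : 0 ≤ R) (hs : 0 < s)
    (T : Finset E) (hT : ↑T ⊆ closedBall x R)
    (hsep : ∀ p ∈ T, ∀ q ∈ T, p ≠ q → s ≤ dist p q) :
    (T.card : ℝ) * (s/2)^n ≤ (R+s)^n := by
  set v := volume (ball (0 : E) 1) with hv
  have hv0 : v ≠ 0 := (measure_ball_pos _ _ one_pos).ne'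
  have hvt : v ≠ ⊤ := measure_ball_lt_top.ne
  have hdisj : (↑T : Set E).PairwiseDisjoint (fun p => ball p (s/2)) := by
    intro p hp q hq hpq
    exact ball_disjoint_ball (by linarith [hsep p hp q hq hpq])
  have hmeas : ∀ p ∈ T, MeasurableSet (ball p (s/2)) := fun p _ => measurableSet_ball
  have hsum : ∑ p ∈ T, volume (ball p (s/2)) = volume (⋃ p ∈ T, ball p (s/2)) :=
    (measure_biUnion_finset hdisj hmeas).symm
  have hsub : (⋃ p ∈ T, ball p (s/2)) ⊆ ball x (R + s) := by
    intro w hw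
    simp only [mem_iUnion] at hw
    obtain ⟨p, hp, hw⟩ := hw
    have := hT hp
    rw [mem_closedBall] at this
    rw [mem_ball] at hw ⊢
    calc dist w x ≤ dist w p + dist p x := dist_triangle _ _ _
      _ < s/2 + R := by linarith
      _ ≤ R + s := by linarith
  have hballs : ∀ p : E, volume (ball p (s/2)) = ENNReal.ofReal ((s/2) ^ n) * v := by
    intro p
    rw [hv, Measure.addHaar_ball_of_pos volume p (by linarith : (0:ℝ) < s/2),
      finrank_euclideanSpace_fin]
  have hbig : volume (ball x (R + s)) = ENNReal.ofReal ((R+s) ^ n) * v := by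
    rw [hv, Measure.addHaar_ball_of_pos volume x (by linarith : (0:ℝ) < R + s),
      finrank_euclideanSpace_fin]
  have key : (T.card : ℝ≥0∞) * (ENNReal.ofReal ((s/2) ^ n) * v) ≤ ENNReal.ofReal ((R+s) ^ n) * v := by
    calc (T.card : ℝ≥0∞) * (ENNReal.ofReal ((s/2) ^ n) * v)
        = ∑ p ∈ T, volume (ball p (s/2)) := by
          rw [Finset.sum_congr rfl (fun p _ => hballs p), Finset.sum_const, nsmul_eq_mul]
      _ = volume (⋃ p ∈ T, ball p (s/2)) := hsum
      _ ≤ volume (ball x (R + s)) := measure_mono hsub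
      _ = _ := hbig
  rw [← mul_assoc, ENNReal.mul_le_mul_iff_left hv0 hvt] at key
  have : ENNReal.ofReal ((T.card : ℝ) * (s/2)^n) ≤ ENNReal.ofReal ((R+s)^n) := by
    rwa [ENNReal.ofReal_mul (by positivity), ENNReal.ofReal_natCast]
  exact (ENNReal.ofReal_le_ofReal_iff (by positivity)).1 this


/-- Existence of a maximal `s`-separated subset (a net) of a set `S`, provided all
separated subsets have cardinality at most `K`. -/
lemma exists_maximal_separated (S : Set E) {s : ℝ} (hs : 0 < s) (K : ℕ)
    (hK : ∀ T : Finset E, ↑T ⊆ S → (∀ p ∈ T, ∀ q ∈ T, p ≠ q → s ≤ dist p q) → T.card ≤ K) :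
    ∃ T : Finset E, ↑T ⊆ S ∧ (∀ p ∈ T, ∀ q ∈ T, p ≠ q → s ≤ dist p q) ∧
      ∀ q ∈ S, ∃ p ∈ T, dist q p ≤ s := by
  classical
  set P : ℕ → Prop := fun m => ∃ T : Finset E, ↑T ⊆ S ∧
    (∀ p ∈ T, ∀ q ∈ T, p ≠ q → s ≤ dist p q) ∧ T.card = m with hPdef
  have hP0 : P 0 := ⟨∅, by simp, by simp, rfl⟩
  have hspec : P (Nat.findGreatest P K) := Nat.findGreatest_spec (Nat.zero_le K) hP0
  obtain ⟨T, hTS, hTsep, hTcard⟩ := hspec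
  refine ⟨T, hTS, hTsep, ?_⟩
  intro q hq
  by_contra hcon
  push_neg at hcon
  have hqT : q ∉ T := by
    intro hqT
    have := hcon q hqT
    simp only [dist_self] at this
    linarith
  have hsep' : ∀ p ∈ insert q T, ∀ p' ∈ insert q T, p ≠ p' → s ≤ dist p p' := by
    intro p hp p' hp' hne
    rcases Finset.mem_insert.1 hp with hpq | hp
    · rcases Finset.mem_insert.1 hp' with hpq' | hp'
      · exact absurd (hpq.trans hpq'.symm) hne
      · rw [hpq]; exact (hcon p' hp').le
    · rcases Finset.mem_insert.1 hp' with hpq' | hp'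
      · rw [hpq', dist_comm]; exact (hcon p hp).le
      · exact hTsep p hp p' hp' hne
  have hsub' : ↑(insert q T) ⊆ S := by
    rw [Finset.coe_insert]
    exact insert_subset hq hTS
  have hcard' : (insert q T).card = Nat.findGreatest P K + 1 := by
    rw [Finset.card_insert_of_notMem hqT, hTcard]
  have hle : (insert q T).card ≤ K := hK _ hsub' hsep'
  have hP1 : P (Nat.findGreatest P K + 1) := ⟨insert q T, hsub', hsep', hcard'⟩
  exact Nat.findGreatest_is_greatest (n := K) (k := Nat.findGreatest P K + 1) (Nat.lt_succ_self _) (by omega) hP1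
lemma packing_card_le (x : E) {R s : ℝ} (hR : 0 ≤ R) (hs : 0 < s) (K : ℕ)
    (hK : (R + s) ^ n ≤ (K : ℝ) * (s/2)^n)
    (T : Finset E) (hT : ↑T ⊆ closedBall x R)
    (hsep : ∀ p ∈ T, ∀ q ∈ T, p ≠ q → s ≤ dist p q)
    (hpack : (T.card : ℝ) * (s/2)^n ≤ (R+s)^n) : T.card ≤ K := by
  have h2 : (T.card : ℝ) * (s/2)^n ≤ (K : ℝ) * (s/2)^n := hpack.trans hK
  have hpos : (0:ℝ) < (s/2)^n := by positivity
  have := (mul_le_mul_iff_left₀ hpos).1 h2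
  exact_mod_cast this

/-- Upper Ahlfors-regularity bound at all scales (not just below the diameter). -/
lemma measure_upper_all_scales {d C₀ : ℝ} (hd₀ : 0 ≤ d) (hC₀ : 0 < C₀)
    {Γ : Set E}
    (hAR : ∀ x ∈ Γ, ∀ r : ℝ, 0 < r → ENNReal.ofReal r < EMetric.diam Γ →
      ENNReal.ofReal (C₀⁻¹ * r ^ d) ≤ μH[d] (Γ ∩ ball x r) ∧
      μH[d] (Γ ∩ ball x r) ≤ ENNReal.ofReal (C₀ * r ^ d))
    (hdiam : 0 < EMetric.diam Γ)
    {x : E} (hx : x ∈ Γ) {R : ℝ} (hR : 0 < R) :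
    μH[d] (Γ ∩ ball x R) ≤ ENNReal.ofReal ((8:ℝ)^n * C₀ * R ^ d) := by
  have hRd : (0:ℝ) ≤ R ^ d := Real.rpow_nonneg hR.le d
  have h8 : (1:ℝ) ≤ (8:ℝ)^n := one_le_pow₀ (by norm_num)
  by_cases hcase : ENNReal.ofReal R < EMetric.diam Γ
  · refine ((hAR x hx R hR hcase).2).trans (ENNReal.ofReal_le_ofReal ?_)
    have h1 : C₀ * R ^ d ≤ (8:ℝ)^n * (C₀ * R ^ d) := le_mul_of_one_le_left (by positivity) h8
    linarith [h1, mul_assoc ((8:ℝ)^n) C₀ (R^d)]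
  · push_neg at hcase
    have hdne : EMetric.diam Γ ≠ ⊤ := by
      intro h
      rw [h] at hcase
      exact absurd hcase (not_le.2 ENNReal.ofReal_lt_top)
    set Dr : ℝ := (EMetric.diam Γ).toReal with hDr
    have hDr0 : 0 < Dr := ENNReal.toReal_pos hdiam.ne' hdne
    have hDrR : Dr ≤ R := by
      rw [hDr]
      exact ENNReal.toReal_le_of_le_ofReal hR.le hcase
    have hbdd : IsBounded Γ := by
      rw [Metric.isBounded_iff_ediam_ne_top]; exact hdne
    have hinball : Γ ⊆ closedBall x Dr := by
      intro y hy
      rw [mem_closedBall]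
      exact Metric.dist_le_diam_of_mem hbdd hy hx
    -- every (Dr/3)-separated subset of Γ has at most 8^n elements
    have hsepbound : ∀ T : Finset E, ↑T ⊆ Γ →
        (∀ p ∈ T, ∀ q ∈ T, p ≠ q → Dr/3 ≤ dist p q) → T.card ≤ 8^n := by
      intro T hTS hTsep
      refine packing_card_le x hDr0.le (by linarith : (0:ℝ) < Dr/3) (8^n) ?_
        T (hTS.trans hinball) hTsep
        (packing_lemma x hDr0.le (by linarith) T (hTS.trans hinball) hTsep)
      push_cast
      rw [show Dr + Dr/3 = 8 * (Dr/3/2) by ring, mul_pow]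
    obtain ⟨T, hTS, hTsep, hTcov⟩ :=
      exists_maximal_separated Γ (by linarith : (0:ℝ) < Dr/3) (8^n) hsepbound
    have hcard : T.card ≤ 8^n := hsepbound T hTS hTsep
    have hcover : Γ ⊆ ⋃ p ∈ T, Γ ∩ ball p (Dr/2) := by
      intro q hq
      obtain ⟨p, hp, hqp⟩ := hTcov q hq
      simp only [mem_iUnion]
      exact ⟨p, hp, hq, by rw [mem_ball]; linarith⟩
    have hhalf : ENNReal.ofReal (Dr/2) < EMetric.diam Γ := by
      have : EMetric.diam Γ = ENNReal.ofReal Dr := (ENNReal.ofReal_toReal hdne).symm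
      rw [this]
      exact ENNReal.ofReal_lt_ofReal_iff_of_nonneg (by linarith) |>.2 (by linarith)
    calc μH[d] (Γ ∩ ball x R) ≤ μH[d] (⋃ p ∈ T, Γ ∩ ball p (Dr/2)) :=
          measure_mono ((inter_subset_left).trans hcover)
      _ ≤ ∑ p ∈ T, μH[d] (Γ ∩ ball p (Dr/2)) := measure_biUnion_finset_le _ _
      _ ≤ ∑ p ∈ T, ENNReal.ofReal (C₀ * (Dr/2) ^ d) := by
          refine Finset.sum_le_sum fun p hp => ?_
          exact (hAR p (hTS hp) (Dr/2) (by linarith) hhalf).2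
      _ = (T.card : ℝ≥0∞) * ENNReal.ofReal (C₀ * (Dr/2) ^ d) := by
          rw [Finset.sum_const, nsmul_eq_mul]
      _ ≤ ENNReal.ofReal ((8:ℝ)^n * C₀ * R ^ d) := by
          have h1 : (T.card : ℝ≥0∞) ≤ ENNReal.ofReal ((8:ℝ)^n) := by
            rw [show ((8:ℝ)^n) = ((8^n : ℕ) : ℝ) by push_cast; ring, ENNReal.ofReal_natCast]
            exact_mod_cast hcard
          have h2 : C₀ * (Dr/2) ^ d ≤ C₀ * R ^ d := by
            have := Real.rpow_le_rpow (by linarith : (0:ℝ) ≤ Dr/2) (by linarith : Dr/2 ≤ R) hd₀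
            nlinarith
          calc (T.card : ℝ≥0∞) * ENNReal.ofReal (C₀ * (Dr/2) ^ d)
              ≤ ENNReal.ofReal ((8:ℝ)^n) * ENNReal.ofReal (C₀ * R ^ d) := by
                exact mul_le_mul' h1 (ENNReal.ofReal_le_ofReal h2)
            _ = ENNReal.ofReal ((8:ℝ)^n * (C₀ * R ^ d)) := by
                rw [← ENNReal.ofReal_mul (by positivity)]
            _ = _ := by rw [mul_assoc]

/-- Counting bound: an `s`-separated subset of `Γ ∩ ball z R` has at most `C_B (R/s)^d`
elements. -/
lemma separated_card_le {d C₀ : ℝ} (hd₀ : 0 ≤ d) (hC₀ : 0 < C₀) {Γ : Set E}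
    (hAR : ∀ x ∈ Γ, ∀ r : ℝ, 0 < r → ENNReal.ofReal r < EMetric.diam Γ →
      ENNReal.ofReal (C₀⁻¹ * r ^ d) ≤ μH[d] (Γ ∩ ball x r) ∧
      μH[d] (Γ ∩ ball x r) ≤ ENNReal.ofReal (C₀ * r ^ d))
    (z : E) {R s : ℝ} (hs : 0 < s) (hsR : s ≤ R)
    (T : Finset E) (hT : ↑T ⊆ Γ ∩ ball z R)
    (hsep : ∀ p ∈ T, ∀ q ∈ T, p ≠ q → s ≤ dist p q) :
    (T.card : ℝ) ≤ (max 1 (C₀ * ((8:ℝ)^n * C₀) * (6:ℝ) ^ d)) * (R/s) ^ d := by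
  set M : ℝ := max 1 (C₀ * ((8:ℝ)^n * C₀) * (6:ℝ) ^ d) with hM
  have hR : 0 < R := hs.trans_le hsR
  have hRs1 : (1:ℝ) ≤ R/s := (one_le_div hs).2 hsR
  have hRsd : (1:ℝ) ≤ (R/s)^d := by
    have := Real.rpow_le_rpow zero_le_one hRs1 hd₀
    rwa [Real.one_rpow] at this
  by_cases hcard : T.card ≤ 1
  · calc (T.card : ℝ) ≤ 1 := by exact_mod_cast hcard
      _ ≤ M * (R/s)^d := by
        have : (1:ℝ) ≤ M := le_max_left _ _
        nlinarith
  · push_neg at hcard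
    obtain ⟨a, ha, b, hb, hab⟩ := Finset.one_lt_card.1 hcard
    have hdiam : ENNReal.ofReal s ≤ EMetric.diam Γ := by
      calc ENNReal.ofReal s ≤ ENNReal.ofReal (dist a b) :=
            ENNReal.ofReal_le_ofReal (hsep a ha b hb hab)
        _ = edist a b := (edist_dist a b).symm
        _ ≤ EMetric.diam Γ := EMetric.edist_le_diam_of_mem (hT ha).1 (hT hb).1
    have hdiam0 : 0 < EMetric.diam Γ := lt_of_lt_of_le (ENNReal.ofReal_pos.2 hs) hdiam
    have hhalf : ENNReal.ofReal (s/2) < EMetric.diam Γ :=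
      lt_of_lt_of_le (ENNReal.ofReal_lt_ofReal_iff_of_nonneg (by linarith) |>.2 (by linarith)) hdiam
    obtain ⟨p₀, hp₀⟩ : T.Nonempty := Finset.card_pos.1 (by omega)
    set ν := (μH[d] : Measure E).restrict Γ with hν
    have hdisj : (↑T : Set E).PairwiseDisjoint (fun p => ball p (s/2)) := by
      intro p hp q hq hpq
      exact ball_disjoint_ball (by linarith [hsep p hp q hq hpq])
    have hsum : ∑ p ∈ T, ν (ball p (s/2)) = ν (⋃ p ∈ T, ball p (s/2)) :=
      (measure_biUnion_finset hdisj fun p _ => measurableSet_ball).symm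
    have hsub : (⋃ p ∈ T, ball p (s/2)) ⊆ ball p₀ (2*R + s) := by
      intro w hw
      simp only [mem_iUnion] at hw
      obtain ⟨p, hp, hw⟩ := hw
      rw [mem_ball] at hw ⊢
      have h1 : dist p z < R := (hT hp).2
      have h2 : dist p₀ z < R := (hT hp₀).2
      calc dist w p₀ ≤ dist w p + dist p z + dist z p₀ := dist_triangle4 w p z p₀
        _ < s/2 + R + R := by rw [dist_comm z p₀]; linarith
        _ ≤ 2*R + s := by linarith
    have hlow : ∀ p ∈ T, ENNReal.ofReal (C₀⁻¹ * (s/2) ^ d) ≤ ν (ball p (s/2)) := by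
      intro p hp
      rw [hν, Measure.restrict_apply measurableSet_ball, inter_comm]
      exact (hAR p (hT hp).1 (s/2) (by linarith) hhalf).1
    have hup : ν (ball p₀ (2*R + s)) ≤ ENNReal.ofReal ((8:ℝ)^n * C₀ * (2*R+s) ^ d) := by
      rw [hν, Measure.restrict_apply measurableSet_ball, inter_comm]
      exact measure_upper_all_scales hd₀ hC₀ hAR hdiam0 (hT hp₀).1 (by linarith)
    have key : (T.card : ℝ≥0∞) * ENNReal.ofReal (C₀⁻¹ * (s/2) ^ d)
        ≤ ENNReal.ofReal ((8:ℝ)^n * C₀ * (2*R+s) ^ d) := by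
      calc (T.card : ℝ≥0∞) * ENNReal.ofReal (C₀⁻¹ * (s/2) ^ d)
          = ∑ _p ∈ T, ENNReal.ofReal (C₀⁻¹ * (s/2) ^ d) := by
            rw [Finset.sum_const, nsmul_eq_mul]
        _ ≤ ∑ p ∈ T, ν (ball p (s/2)) := Finset.sum_le_sum hlow
        _ = ν (⋃ p ∈ T, ball p (s/2)) := hsum
        _ ≤ ν (ball p₀ (2*R + s)) := measure_mono hsub
        _ ≤ _ := hup
    have keyR : (T.card : ℝ) * (C₀⁻¹ * (s/2) ^ d) ≤ (8:ℝ)^n * C₀ * (2*R+s) ^ d := by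
      have := key
      rw [← ENNReal.ofReal_natCast, ← ENNReal.ofReal_mul (by positivity)] at this
      exact (ENNReal.ofReal_le_ofReal_iff (by positivity)).1 this
    -- now real arithmetic
    have hs2d : (0:ℝ) < C₀⁻¹ * (s/2) ^ d := by positivity
    have h3R : (2*R+s) ^ d ≤ (3:ℝ)^d * R ^ d := by
      rw [← Real.mul_rpow (by norm_num) hR.le]
      exact Real.rpow_le_rpow (by linarith) (by linarith) hd₀
    have hcard' : (T.card : ℝ) ≤ (8:ℝ)^n * C₀ * ((3:ℝ)^d * R ^ d) / (C₀⁻¹ * (s/2) ^ d) := by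
      rw [le_div_iff₀ hs2d]
      refine keyR.trans ?_
      have h8C : (0:ℝ) ≤ (8:ℝ)^n * C₀ := by positivity
      nlinarith [mul_le_mul_of_nonneg_left h3R h8C]
    refine hcard'.trans ?_
    have hsd : (0:ℝ) < s ^ d := Real.rpow_pos_of_pos hs d
    have h2d : (0:ℝ) < (2:ℝ) ^ d := Real.rpow_pos_of_pos (by norm_num) d
    have hs2 : (s/2) ^ d = s ^ d / (2:ℝ)^d := Real.div_rpow hs.le (by norm_num) d
    have hRs : (R/s) ^ d = R ^ d / s ^ d := Real.div_rpow hR.le hs.le d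
    have h6 : (6:ℝ)^d = (3:ℝ)^d * (2:ℝ)^d := by
      rw [← Real.mul_rpow (by norm_num) (by norm_num)]; norm_num
    have hMge : C₀ * ((8:ℝ)^n * C₀) * (6:ℝ) ^ d ≤ M := le_max_right _ _
    have h1 : (8:ℝ)^n * C₀ * ((3:ℝ)^d * R ^ d) / (C₀⁻¹ * (s/2) ^ d)
        = (C₀ * ((8:ℝ)^n * C₀) * (6:ℝ)^d) * (R/s) ^ d := by
      rw [hRs, hs2, h6]
      field_simp
    rw [h1]
    exact mul_le_mul_of_nonneg_right hMge (by positivity)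

noncomputable def CB (n : ℕ) (d C₀ : ℝ) : ℝ := max 1 (C₀ * ((8:ℝ)^n * C₀) * (6:ℝ) ^ d)


/-- Existence of an `s`-net of controlled cardinality for `Γ ∩ ball z R`. -/
lemma exists_cover {d C₀ : ℝ} (hd₀ : 0 ≤ d) (hC₀ : 0 < C₀) {Γ : Set E}
    (hAR : ∀ x ∈ Γ, ∀ r : ℝ, 0 < r → ENNReal.ofReal r < EMetric.diam Γ →
      ENNReal.ofReal (C₀⁻¹ * r ^ d) ≤ μH[d] (Γ ∩ ball x r) ∧
      μH[d] (Γ ∩ ball x r) ≤ ENNReal.ofReal (C₀ * r ^ d))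
    (z : E) {R s : ℝ} (hs : 0 < s) (hsR : s ≤ R) :
    ∃ T : Finset E, ↑T ⊆ Γ ∩ ball z R ∧
      (T.card : ℝ) ≤ CB n d C₀ * (R/s) ^ d ∧
      ∀ q ∈ Γ ∩ ball z R, ∃ p ∈ T, dist q p ≤ s := by
  have hK : ∀ T : Finset E, ↑T ⊆ Γ ∩ ball z R →
      (∀ p ∈ T, ∀ q ∈ T, p ≠ q → s ≤ dist p q) → T.card ≤ ⌊CB n d C₀ * (R/s) ^ d⌋₊ :=
    fun T hT hsep => Nat.le_floor (separated_card_le hd₀ hC₀ hAR z hs hsR T hT hsep)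
  obtain ⟨T, h1, h2, h3⟩ := exists_maximal_separated (Γ ∩ ball z R) hs _ hK
  exact ⟨T, h1, separated_card_le hd₀ hC₀ hAR z hs hsR T h1 h2, h3⟩

/-- If a ball of radius `r0` is covered by `card` balls of radius `ρ`, then
`r0^n ≤ card * ρ^n`. -/
lemma vol_compare {x0 : E} {r0 ρ : ℝ} (hr0 : 0 < r0) (hρ : 0 < ρ)
    {α : Type*} (T : Finset α) (cen : α → E)
    (h : ball x0 r0 ⊆ ⋃ p ∈ T, ball (cen p) ρ) :
    r0 ^ n ≤ (T.card : ℝ) * ρ ^ n := by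
  set v := volume (ball (0 : E) 1) with hv
  have hv0 : v ≠ 0 := (measure_ball_pos _ _ one_pos).ne'
  have hvt : v ≠ ⊤ := measure_ball_lt_top.ne
  have hball : ∀ p : E, volume (ball p ρ) = ENNReal.ofReal (ρ ^ n) * v := fun p => by
    rw [hv, Measure.addHaar_ball_of_pos volume p hρ, finrank_euclideanSpace_fin]
  have key : ENNReal.ofReal (r0 ^ n) * v ≤ (T.card : ℝ≥0∞) * ENNReal.ofReal (ρ ^ n) * v := by
    calc ENNReal.ofReal (r0 ^ n) * v = volume (ball x0 r0) := by
          rw [hv, Measure.addHaar_ball_of_pos volume x0 hr0, finrank_euclideanSpace_fin]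
      _ ≤ volume (⋃ p ∈ T, ball (cen p) ρ) := measure_mono h
      _ ≤ ∑ p ∈ T, volume (ball (cen p) ρ) := measure_biUnion_finset_le _ _
      _ = (T.card : ℝ≥0∞) * ENNReal.ofReal (ρ ^ n) * v := by
          rw [Finset.sum_congr rfl fun p _ => hball (cen p), Finset.sum_const, nsmul_eq_mul,
            mul_assoc]
  rw [ENNReal.mul_le_mul_iff_left hv0 hvt] at key
  rw [← ENNReal.ofReal_natCast, ← ENNReal.ofReal_mul (by positivity)] at key
  exact (ENNReal.ofReal_le_ofReal_iff (by positivity)).1 key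




/-- Existence of a good translation vector `v`: the translated segment from `X + v` to
`Y + v` stays at distance at least `c * r` from `Γ`. -/
lemma exists_good_translation {d C₀ : ℝ} (hd₀ : 0 ≤ d) (hC₀ : 0 < C₀)
    {Γ : Set E}
    (hAR : ∀ x ∈ Γ, ∀ r : ℝ, 0 < r → ENNReal.ofReal r < EMetric.diam Γ →
      ENNReal.ofReal (C₀⁻¹ * r ^ d) ≤ μH[d] (Γ ∩ ball x r) ∧
      μH[d] (Γ ∩ ball x r) ≤ ENNReal.ofReal (C₀ * r ^ d))
    (hΓ : Γ.Nonempty)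
    {ε c : ℝ} (hε0 : 0 < ε) (hε8 : ε ≤ 1/8) (hc0 : 0 < c) (hcε : c ≤ ε)
    (hkey : CB n d C₀ * (8/(ε*c))^d * (9/(ε*c)) * (4*c)^n ≤ (1/2:ℝ)^n / 2)
    (X Y : E) {r : ℝ} (hr : 0 < r)
    (hXY : dist X Y ≤ 7 * ε⁻¹ * r) :
    ∃ v : E, ‖v‖ < r/2 ∧
      ∀ t : ℝ, 0 ≤ t → t ≤ 1 → c * r ≤ infDist (X + v + t • (Y - X)) Γ := by
  by_contra hcon
  push_neg at hcon
  set u := Y - X with hu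
  set η := c * r with hη
  have hη0 : 0 < η := by positivity
  have hεinv : (8:ℝ) ≤ ε⁻¹ := by
    rw [inv_eq_one_div, le_div_iff₀ hε0]
    linarith
  have hεc1 : ε * c ≤ 1 := by nlinarith
  have hunorm : ‖u‖ ≤ 7 * ε⁻¹ * r := by
    rw [hu, ← dist_eq_norm, dist_comm]
    exact hXY
  -- the net on Γ at scale η in a large ball around X
  have hsR : η ≤ 8 * r / ε := by
    rw [div_eq_mul_inv]
    calc η = c * r := hη
      _ ≤ 1 * r := by nlinarith
      _ ≤ 8 * r * ε⁻¹ := by nlinarith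
      _ = 8 * r / ε := by rw [div_eq_mul_inv]
  obtain ⟨T, hTsub, hTcard, hTcov⟩ := exists_cover hd₀ hC₀ hAR X hη0 hsR
  set M : ℕ := ⌊‖u‖ / η⌋₊ + 1 with hMdef
  have hM0 : (0:ℝ) < (M:ℝ) := by rw [hMdef]; push_cast; positivity
  have huM : ‖u‖ < (M:ℝ) * η := by
    have h1 : ‖u‖ / η < (M:ℝ) := by
      rw [hMdef]; push_cast
      exact Nat.lt_floor_add_one _
    rwa [div_lt_iff₀ hη0] at h1
  have hεc0 : (0:ℝ) < ε * c := by positivity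
  have h2 : ‖u‖ / η ≤ 7 / (ε*c) := by
    rw [div_le_div_iff₀ hη0 hεc0]
    calc ‖u‖ * (ε * c) ≤ (7 * ε⁻¹ * r) * (ε * c) := by
          nlinarith [norm_nonneg u]
      _ = 7 * (ε⁻¹ * ε) * (c * r) := by ring
      _ = 7 * η := by rw [inv_mul_cancel₀ hε0.ne', hη]; ring
  have hM9 : (M:ℝ) + 1 ≤ 9 / (ε*c) := by
    have h3 : (2:ℝ) ≤ 2/(ε*c) := by
      rw [le_div_iff₀ hεc0]; nlinarith
    have h4 : (M:ℝ) + 1 ≤ ‖u‖ / η + 2 := by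
      rw [hMdef]; push_cast
      linarith [Nat.floor_le (show (0:ℝ) ≤ ‖u‖ / η by positivity)]
    have h5 : (7:ℝ)/(ε*c) + 2/(ε*c) = 9/(ε*c) := by ring
    linarith
  -- covering claim
  have hcover : ball (0:E) (r/2) ⊆
      ⋃ pk ∈ T ×ˢ Finset.range (M+1), ball (pk.1 - X - ((pk.2:ℝ)/(M:ℝ)) • u) (4*η) := by
    intro v hv
    rw [mem_ball_zero_iff] at hv
    obtain ⟨t, ht0, ht1, hlt⟩ := hcon v hv
    obtain ⟨γ, hγΓ, hγd⟩ := (Metric.infDist_lt_iff hΓ).1 hlt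
    have hqX : dist (X + v + t • u) X ≤ r/2 + 7*ε⁻¹*r := by
      have e : X + v + t • u - X = v + t • u := by abel
      rw [dist_eq_norm, e]
      calc ‖v + t • u‖ ≤ ‖v‖ + ‖t • u‖ := norm_add_le _ _
        _ = ‖v‖ + t * ‖u‖ := by rw [norm_smul, Real.norm_eq_abs, abs_of_nonneg ht0]
        _ ≤ r/2 + 7*ε⁻¹*r := by
            have ht : t * ‖u‖ ≤ ‖u‖ := mul_le_of_le_one_left (norm_nonneg u) ht1
            linarith
    have hγX : γ ∈ Γ ∩ ball X (8*r/ε) := by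
      refine ⟨hγΓ, ?_⟩
      rw [mem_ball]
      have : dist γ X ≤ dist γ (X + v + t • u) + dist (X + v + t • u) X := dist_triangle _ _ _
      rw [dist_comm γ (X + v + t • u)] at this
      have h8 : η + (r/2 + 7*ε⁻¹*r) < 8*r/ε := by
        have a4 : 8*r/ε = 8*(ε⁻¹*r) := by rw [div_eq_mul_inv]; ring
        rw [hη, a4]
        have a1 : c*r ≤ ε*r := mul_le_mul_of_nonneg_right hcε hr.le
        have a2 : ε*r ≤ (1/8)*r := mul_le_mul_of_nonneg_right hε8 hr.le
        have a3 : 8*r ≤ ε⁻¹*r := mul_le_mul_of_nonneg_right hεinv hr.le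
        nlinarith
      linarith
    obtain ⟨p, hpT, hpγ⟩ := hTcov γ hγX
    set k : ℕ := ⌊t * M⌋₊ with hkdef
    have hkM : k ≤ M := by
      rw [hkdef]
      calc ⌊t * M⌋₊ ≤ ⌊(M:ℝ)⌋₊ := Nat.floor_le_floor (by nlinarith)
        _ = M := Nat.floor_natCast M
    have hk1 : (k:ℝ) ≤ t * M := Nat.floor_le (by positivity)
    have hk2 : t * M < (k:ℝ) + 1 := Nat.lt_floor_add_one _
    have htk : |(k:ℝ)/(M:ℝ) - t| * ‖u‖ ≤ η := by
      have habs : |(k:ℝ)/(M:ℝ) - t| ≤ 1/(M:ℝ) := by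
        have h6 : (k:ℝ)/(M:ℝ) ≤ t := by
          rw [div_le_iff₀ hM0]; linarith
        have h5 : t ≤ ((k:ℝ)+1)/(M:ℝ) := by
          rw [le_div_iff₀ hM0]; linarith
        have hdiv : ((k:ℝ)+1)/(M:ℝ) = (k:ℝ)/(M:ℝ) + 1/(M:ℝ) := add_div _ _ _
        have hM0' : (0:ℝ) < 1/(M:ℝ) := by positivity
        rw [abs_le]
        constructor
        · linarith
        · linarith
      calc |(k:ℝ)/(M:ℝ) - t| * ‖u‖ ≤ (1/(M:ℝ)) * ‖u‖ := by
            nlinarith [norm_nonneg u]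
        _ ≤ η := by
            rw [div_mul_eq_mul_div, div_le_iff₀ hM0]
            nlinarith [norm_nonneg u]
    simp only [Finset.mem_product, mem_iUnion, Finset.mem_range]
    refine ⟨(p, k), ⟨hpT, by omega⟩, ?_⟩
    rw [mem_ball, dist_eq_norm]
    have hveq : v - (p - X - ((k:ℝ)/(M:ℝ)) • u)
        = ((X + v + t • u) - γ) + (γ - p) + (((k:ℝ)/(M:ℝ)) - t) • u := by
      rw [sub_smul]; abel
    rw [hveq]
    calc ‖((X + v + t • u) - γ) + (γ - p) + (((k:ℝ)/(M:ℝ)) - t) • u‖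
        ≤ ‖(X + v + t • u) - γ‖ + ‖γ - p‖ + ‖(((k:ℝ)/(M:ℝ)) - t) • u‖ := norm_add₃_le
      _ < η + η + η := by
          have e1 : ‖(X + v + t • u) - γ‖ < η := by rw [← dist_eq_norm]; exact hγd
          have e2 : ‖γ - p‖ ≤ η := by rw [← dist_eq_norm]; exact hpγ
          have e3 : ‖(((k:ℝ)/(M:ℝ)) - t) • u‖ ≤ η := by
            rw [norm_smul, Real.norm_eq_abs]; exact htk
          linarith
      _ ≤ 4 * η := by linarith
  -- volume comparison and contradiction
  have hvol := vol_compare (show (0:ℝ) < r/2 by linarith) (show (0:ℝ) < 4*η by linarith)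
    (T ×ˢ Finset.range (M+1)) (fun pk => pk.1 - X - ((pk.2:ℝ)/(M:ℝ)) • u) hcover
  rw [Finset.card_product, Finset.card_range] at hvol
  -- real arithmetic contradiction
  have hTc : (T.card : ℝ) ≤ CB n d C₀ * (8/(ε*c))^d := by
    have e : (8*r/ε) / η = 8/(ε*c) := by
      rw [hη]; field_simp
    rw [← e]; exact hTcard
  have hCB0 : (0:ℝ) < CB n d C₀ := lt_of_lt_of_le one_pos (le_max_left _ _)
  have h8d : (0:ℝ) ≤ (8/(ε*c))^d := Real.rpow_nonneg (by positivity) d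
  have hprod : ((T.card * (M+1) : ℕ) : ℝ) ≤ (CB n d C₀ * (8/(ε*c))^d) * (9/(ε*c)) := by
    rw [Nat.cast_mul, Nat.cast_add, Nat.cast_one]
    have hM1 : (0:ℝ) ≤ (M:ℝ) + 1 := by positivity
    have := mul_le_mul hTc hM9 hM1 (by positivity)
    linarith
  have h4η : (4*η)^n = (4*c)^n * r^n := by
    rw [hη, show (4:ℝ)*(c*r) = (4*c)*r by ring, mul_pow]
  have hfin : (r/2)^n ≤ ((1/2:ℝ)^n/2) * r^n := by
    calc (r/2)^n ≤ ((T.card * (M+1) : ℕ) : ℝ) * (4*η)^n := hvol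
      _ ≤ ((CB n d C₀ * (8/(ε*c))^d) * (9/(ε*c))) * ((4*c)^n * r^n) := by
          rw [h4η]
          exact mul_le_mul hprod le_rfl (by positivity) (by positivity)
      _ = (CB n d C₀ * (8/(ε*c))^d * (9/(ε*c)) * (4*c)^n) * r^n := by ring
      _ ≤ ((1/2:ℝ)^n/2) * r^n := by
          exact mul_le_mul_of_nonneg_right hkey (by positivity)
  have hhalf : (r/2)^n = (1/2:ℝ)^n * r^n := by
    rw [show r/2 = (1/2)*r by ring, mul_pow]
  have hpos : (0:ℝ) < (1/2:ℝ)^n * r^n := by positivity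
  rw [hhalf] at hfin
  linarith


/-- Corkscrew point existence. -/
lemma corkscrew {n : ℕ} {d C₀ : ℝ} (hd₀ : 0 ≤ d) (hC₀ : 0 < C₀)
    {Γ : Set (EuclideanSpace ℝ (Fin n))}
    (hAR : ∀ x ∈ Γ, ∀ r : ℝ, 0 < r → ENNReal.ofReal r < EMetric.diam Γ →
      ENNReal.ofReal (C₀⁻¹ * r ^ d) ≤ μH[d] (Γ ∩ ball x r) ∧
      μH[d] (Γ ∩ ball x r) ≤ ENNReal.ofReal (C₀ * r ^ d))
    {ε : ℝ} (hε0 : 0 < ε) (hε8 : ε ≤ 1/8)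
    (hkey1 : CB n d C₀ * 2^n * ε ^ ((n:ℝ)-d) ≤ (1/2:ℝ)^n / 2)
    {x : EuclideanSpace ℝ (Fin n)} (hx : x ∈ Γ) {r : ℝ} (hr : 0 < r)
    (hrdiam : ENNReal.ofReal r < EMetric.diam Γ) :
    ∃ A : EuclideanSpace ℝ (Fin n), A ∈ Γᶜ ∩ ball x r ∧ ball A ((ε⁻¹)⁻¹ * r) ⊆ Γᶜ := by
  have hΓ : Γ.Nonempty := ⟨x, hx⟩
  have hsR : ε * r ≤ r := by nlinarith
  have hA : ∃ A : EuclideanSpace ℝ (Fin n), dist A x < r/2 ∧ ε * r ≤ infDist A Γ := by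
    by_contra hcon
    push_neg at hcon
    obtain ⟨T, hTsub, hTcard, hTcov⟩ :=
      exists_cover hd₀ hC₀ hAR x (show (0:ℝ) < ε*r by positivity) hsR
    have hcover : ball x (r/2) ⊆ ⋃ p ∈ T, ball p (2*(ε*r)) := by
      intro w hw
      rw [mem_ball] at hw
      have h1 : infDist w Γ < ε * r := hcon w hw
      obtain ⟨γ, hγΓ, hγd⟩ := (Metric.infDist_lt_iff hΓ).1 h1
      have hγball : γ ∈ Γ ∩ ball x r := by
        refine ⟨hγΓ, ?_⟩
        rw [mem_ball]
        have h2 : dist γ x ≤ dist γ w + dist w x := dist_triangle _ _ _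
        rw [dist_comm γ w] at h2
        nlinarith
      obtain ⟨p, hpT, hpγ⟩ := hTcov γ hγball
      simp only [mem_iUnion]
      refine ⟨p, hpT, ?_⟩
      rw [mem_ball]
      calc dist w p ≤ dist w γ + dist γ p := dist_triangle _ _ _
        _ < ε*r + ε*r := by linarith
        _ = 2*(ε*r) := by ring
    have hvol := vol_compare (show (0:ℝ) < r/2 by linarith)
      (show (0:ℝ) < 2*(ε*r) by positivity) T id hcover
    have e1 : r/(ε*r) = ε⁻¹ := by
      rw [inv_eq_one_div, div_eq_div_iff (by positivity : (0:ℝ) < ε*r).ne' hε0.ne']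
      ring
    have hTc2 : (T.card : ℝ) ≤ CB n d C₀ * (ε^d)⁻¹ := by
      rw [e1, Real.inv_rpow hε0.le] at hTcard
      exact hTcard
    have hεd : (0:ℝ) < ε^d := Real.rpow_pos_of_pos hε0 d
    have hεnd : (ε:ℝ)^n = ε^d * ε^((n:ℝ)-d) := by
      have : ε^d * ε^((n:ℝ)-d) = ε ^ (d + ((n:ℝ)-d)) := (Real.rpow_add hε0 _ _).symm
      rw [this, show d + ((n:ℝ)-d) = ((n:ℕ):ℝ) by push_cast; ring, Real.rpow_natCast]
    have e2 : (2*(ε*r))^n = 2^n * (ε^n * r^n) := by rw [mul_pow, mul_pow]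
    have hB0 : (0:ℝ) < CB n d C₀ := lt_of_lt_of_le one_pos (le_max_left _ _)
    have hfin : ((1:ℝ)/2)^n * r^n ≤ ((1/2:ℝ)^n/2) * r^n := by
      calc ((1:ℝ)/2)^n * r^n = (r/2)^n := by rw [mul_comm (((1:ℝ)/2)^n), ← mul_pow, mul_one_div]
        _ ≤ (T.card : ℝ) * (2*(ε*r))^n := hvol
        _ ≤ (CB n d C₀ * (ε^d)⁻¹) * (2^n * (ε^n * r^n)) := by
            rw [← e2]
            exact mul_le_mul hTc2 le_rfl (by positivity) (by positivity)
        _ = (CB n d C₀ * 2^n * ε^((n:ℝ)-d)) * r^n := by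
            rw [hεnd]
            field_simp
        _ ≤ ((1/2:ℝ)^n/2) * r^n := mul_le_mul_of_nonneg_right hkey1 (by positivity)
    have hpos : (0:ℝ) < ((1:ℝ)/2)^n * r^n := by positivity
    linarith
  obtain ⟨A, hA1, hA2⟩ := hA
  have hεr : (0:ℝ) < ε * r := by positivity
  refine ⟨A, ⟨?_, ?_⟩, ?_⟩
  · intro hAΓ
    rw [Metric.infDist_zero_of_mem hAΓ] at hA2
    linarith
  · rw [mem_ball]; linarith
  · rw [inv_inv]
    intro w hw hwΓ
    rw [mem_ball] at hw
    have : infDist A Γ ≤ dist A w := Metric.infDist_le_dist_of_mem hwΓ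
    rw [dist_comm A w] at this
    linarith

lemma chain_assembly {n : ℕ} {Γ : Set (EuclideanSpace ℝ (Fin n))}
    {ε c : ℝ} (hε0 : 0 < ε) (hε8 : ε ≤ 1/8) (hc0 : 0 < c) (hcε : c ≤ ε)
    (X Y : EuclideanSpace ℝ (Fin n)) (hXc : X ∈ Γᶜ) (hYc : Y ∈ Γᶜ) (r : ℝ) (hr : 0 < r)
    (hX : r ≤ Metric.infDist X Γ) (hY : r ≤ Metric.infDist Y Γ)
    (hXY : dist X Y ≤ 7 * ε⁻¹ * r)
    (hgt : ∃ v : EuclideanSpace ℝ (Fin n), ‖v‖ < r/2 ∧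
      ∀ t : ℝ, 0 ≤ t → t ≤ 1 → c * r ≤ Metric.infDist (X + v + t • (Y - X)) Γ) :
    ∃ Z : ℕ → EuclideanSpace ℝ (Fin n),
      Z 0 = X ∧ Z ((⌊14/(ε*c)⌋₊ + 1) + 8) = Y ∧
      (∀ i ≤ (⌊14/(ε*c)⌋₊ + 1) + 8, Z i ∈ Γᶜ) ∧
      ∀ i < (⌊14/(ε*c)⌋₊ + 1) + 8, dist (Z (i + 1)) (Z i) ≤ Metric.infDist (Z i) Γ / 2 := by
  classical
  set K₁ : ℕ := ⌊14/(ε*c)⌋₊ + 1 with hK₁def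
  obtain ⟨v, hv, hgood⟩ := hgt
  set u := Y - X with hu
  have hK₁0 : (0:ℝ) < (K₁:ℝ) := by rw [hK₁def]; push_cast; positivity
  have hK₁ : 14/(ε*c) ≤ (K₁:ℝ) := by
    rw [hK₁def]; push_cast
    exact (Nat.lt_floor_add_one _).le
  have hεc0 : (0:ℝ) < ε * c := by positivity
  have hunorm : ‖u‖ ≤ 7 * ε⁻¹ * r := by
    rw [hu, ← dist_eq_norm, dist_comm]; exact hXY
  have hstep_mid : ‖u‖/(K₁:ℝ) ≤ c*r/2 := by
    rw [div_le_iff₀ hK₁0]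
    have h1 : (c*r/2) * (14/(ε*c)) = 7*ε⁻¹*r := by
      field_simp
      ring
    calc ‖u‖ ≤ 7*ε⁻¹*r := hunorm
      _ = (c*r/2) * (14/(ε*c)) := h1.symm
      _ ≤ (c*r/2) * (K₁:ℝ) := by
          exact mul_le_mul_of_nonneg_left hK₁ (by positivity)
      _ = c*r/2 * (K₁:ℝ) := by ring
  -- the chain
  set Z : ℕ → EuclideanSpace ℝ (Fin n) := fun i =>
    if i ≤ 4 then X + ((i:ℝ)/4) • v
    else if i ≤ 4 + K₁ then X + v + (((i-4:ℕ):ℝ)/(K₁:ℝ)) • u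
    else Y + (((K₁+8-i:ℕ):ℝ)/4) • v with hZ
  have hdist : ∀ (W w : EuclideanSpace ℝ (Fin n)) (a b : ℝ),
      dist (W + a • w) (W + b • w) = |a - b| * ‖w‖ := by
    intro W w a b
    have e : W + a • w - (W + b • w) = (a - b) • w := by
      rw [sub_smul]; abel
    rw [dist_eq_norm, e, norm_smul, Real.norm_eq_abs]
  have hdistX : ∀ (W w : EuclideanSpace ℝ (Fin n)) (a : ℝ), dist (W + a • w) W = |a| * ‖w‖ := by
    intro W w a
    have := hdist W w a 0
    rwa [zero_smul, add_zero, sub_zero] at this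
  -- branch computations
  have hZ1 : ∀ i, i ≤ 4 → Z i = X + ((i:ℝ)/4) • v := by
    intro i hi; rw [hZ]; simp only [if_pos hi]
  have hZ2 : ∀ j, j ≤ K₁ → Z (4+j) = X + v + ((j:ℝ)/(K₁:ℝ)) • u := by
    intro j hj
    rcases Nat.eq_zero_or_pos j with rfl | hj0
    · rw [hZ]
      simp only [Nat.add_zero, if_pos (le_refl 4)]
      norm_num
    · rw [hZ]
      have h1 : ¬ (4 + j ≤ 4) := by omega
      have h2 : 4 + j ≤ 4 + K₁ := by omega
      simp only [if_neg h1, if_pos h2, Nat.add_sub_cancel_left]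
  have hZ3 : ∀ i, 4 + K₁ < i → Z i = Y + (((K₁+8-i:ℕ):ℝ)/4) • v := by
    intro i hi
    rw [hZ]
    have h1 : ¬ (i ≤ 4) := by omega
    have h2 : ¬ (i ≤ 4 + K₁) := by omega
    simp only [if_neg h1, if_neg h2]
  -- infDist lower bounds
  have hfirst : ∀ i, i ≤ 4 → r/2 ≤ infDist (Z i) Γ := by
    intro i hi
    have hd1 : dist (Z i) X ≤ ‖v‖ := by
      rw [hZ1 i hi, hdistX]
      have h4 : |((i:ℝ))/4| ≤ 1 := by
        rw [abs_div, abs_of_nonneg (by positivity : (0:ℝ) ≤ (i:ℝ))]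
        have : (i:ℝ) ≤ 4 := by exact_mod_cast hi
        rw [abs_of_nonneg (by norm_num : (0:ℝ) ≤ (4:ℝ)), div_le_one (by norm_num)]
        exact this
      calc |((i:ℝ))/4| * ‖v‖ ≤ 1 * ‖v‖ :=
            mul_le_mul_of_nonneg_right h4 (norm_nonneg v)
        _ = ‖v‖ := one_mul _
    have h5 : infDist X Γ ≤ infDist (Z i) Γ + dist X (Z i) :=
      Metric.infDist_le_infDist_add_dist
    rw [dist_comm X (Z i)] at h5
    linarith
  have hmid : ∀ j, j ≤ K₁ → c*r ≤ infDist (Z (4+j)) Γ := by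
    intro j hj
    rw [hZ2 j hj]
    exact hgood ((j:ℝ)/(K₁:ℝ)) (by positivity)
      ((div_le_one hK₁0).2 (by exact_mod_cast hj))
  have hlast : ∀ i, 4 + K₁ < i → r/2 ≤ infDist (Z i) Γ := by
    intro i hi
    have hd1 : dist (Z i) Y ≤ ‖v‖ := by
      rw [hZ3 i hi, hdistX]
      have h4 : |(((K₁+8-i:ℕ):ℝ))/4| ≤ 1 := by
        rw [abs_div, abs_of_nonneg (by positivity : (0:ℝ) ≤ ((K₁+8-i:ℕ):ℝ))]
        have h6 : (K₁+8-i:ℕ) ≤ 4 := by omega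
        have : ((K₁+8-i:ℕ):ℝ) ≤ 4 := by exact_mod_cast h6
        rw [abs_of_nonneg (by norm_num : (0:ℝ) ≤ (4:ℝ)), div_le_one (by norm_num)]
        exact this
      calc |(((K₁+8-i:ℕ):ℝ))/4| * ‖v‖ ≤ 1 * ‖v‖ :=
            mul_le_mul_of_nonneg_right h4 (norm_nonneg v)
        _ = ‖v‖ := one_mul _
    have h5 : infDist Y Γ ≤ infDist (Z i) Γ + dist Y (Z i) :=
      Metric.infDist_le_infDist_add_dist
    rw [dist_comm Y (Z i)] at h5
    linarith
  refine ⟨Z, ?_, ?_, ?_, ?_⟩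
  · rw [hZ1 0 (by omega)]
    norm_num
  · rw [hZ3 (K₁ + 8) (by omega)]
    simp only [Nat.sub_self]
    norm_num
  · intro i hi
    simp only [mem_compl_iff]
    intro hmem
    have h0 := Metric.infDist_zero_of_mem hmem
    by_cases h1 : i ≤ 4
    · have := hfirst i h1; rw [h0] at this; linarith
    · by_cases h2 : i ≤ 4 + K₁
      · have h3 : i = 4 + (i - 4) := by omega
        have := hmid (i-4) (by omega)
        rw [← h3, h0] at this
        nlinarith
      · have := hlast i (by omega); rw [h0] at this; linarith
  · intro i hi
    by_cases h1 : i < 4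
    · -- first leg
      rw [hZ1 (i+1) (by omega), hZ1 i (by omega), hdist]
      have e : |((i+1:ℕ):ℝ)/4 - ((i:ℕ):ℝ)/4| = 1/4 := by
        push_cast
        rw [show ((i:ℝ)+1)/4 - (i:ℝ)/4 = 1/4 by ring]
        norm_num
      rw [e]
      have hf := hfirst i (by omega)
      rw [hZ1 i (by omega)] at hf
      have hvr : ‖v‖ ≤ r/2 := hv.le
      nlinarith [norm_nonneg v]
    · by_cases h2 : i < 4 + K₁
      · -- middle leg
        obtain ⟨j, rfl⟩ : ∃ j, i = 4 + j := ⟨i - 4, by omega⟩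
        have h4 : 4 + j + 1 = 4 + (j + 1) := by omega
        rw [h4, hZ2 j (by omega), hZ2 (j+1) (by omega), hdist]
        have e : |((j+1:ℕ):ℝ)/(K₁:ℝ) - ((j:ℕ):ℝ)/(K₁:ℝ)| = 1/(K₁:ℝ) := by
          push_cast
          rw [div_sub_div_same, show ((j:ℕ):ℝ) + 1 - ((j:ℕ):ℝ) = 1 by ring]
          rw [abs_of_nonneg (by positivity)]
        rw [e]
        have hm := hmid j (by omega)
        rw [hZ2 j (by omega)] at hm
        have h6 : 1/(K₁:ℝ) * ‖u‖ = ‖u‖/(K₁:ℝ) := by ring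
        rw [h6]
        linarith
      · -- last legs
        by_cases h3 : i = 4 + K₁
        · -- from Y + v to Y + (3/4) v
          have hZi : Z i = Y + (1:ℝ) • v := by
            rw [h3, hZ2 K₁ le_rfl]
            have : ((K₁:ℝ))/(K₁:ℝ) = 1 := div_self hK₁0.ne'
            rw [this, hu]
            rw [one_smul, one_smul]
            abel
          have hZi1 : Z (i+1) = Y + (((3:ℕ):ℝ)/4) • v := by
            rw [hZ3 (i+1) (by omega), show K₁+8-(i+1) = 3 from by omega]
          rw [hZi1, hZi, hdist]
          have hb : r/2 ≤ infDist (Y + (1:ℝ) • v) Γ := by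
            have h5 : infDist Y Γ ≤ infDist (Y + (1:ℝ) • v) Γ + dist Y (Y + (1:ℝ) • v) :=
              Metric.infDist_le_infDist_add_dist
            have h6 : dist Y (Y + (1:ℝ) • v) ≤ ‖v‖ := by
              rw [dist_comm, hdistX, abs_one, one_mul]
            have hvr : ‖v‖ ≤ r/2 := hv.le
            linarith
          have e : |((3:ℕ):ℝ)/4 - (1:ℝ)| = 1/4 := by norm_num
          rw [e]
          have hvr : ‖v‖ ≤ r/2 := hv.le
          nlinarith [norm_nonneg v]
        · -- strictly inside last leg
          have h4 : 4 + K₁ < i := by omega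
          rw [hZ3 (i+1) (by omega), hZ3 i h4, hdist]
          have hnat : (K₁+8-i:ℕ) = (K₁+8-(i+1):ℕ) + 1 := by omega
          have e : |((K₁+8-(i+1):ℕ):ℝ)/4 - ((K₁+8-i:ℕ):ℝ)/4| = 1/4 := by
            rw [hnat, abs_sub_comm]
            push_cast
            rw [div_sub_div_same, add_sub_cancel_left]
            norm_num
          rw [e]
          have hl := hlast i h4
          rw [hZ3 i h4] at hl
          have hvr : ‖v‖ ≤ r/2 := hv.le
          nlinarith [norm_nonneg v]
end AuxiliaryLemmas

/-- If Γ ⊂ ℝⁿ is d-Ahlfors regular with d < n-1, then Ω = ℝⁿ \ Γ satisfies the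
Harnack chain condition: there are C₁ > 0 and C₂ : ℕ (depending on C₀, n, d, with C₁ the
corkscrew constant) such that whenever X, Y ∈ Ω, r > 0, min(δ(X),δ(Y)) ≥ r and
|X - Y| ≤ 7 C₁ r, there is a chain Z₀ = X, …, Z_{C₂} = Y in Ω with
|Z_{i+1} - Z_i| ≤ δ(Z_i)/2, where δ(Z) = dist(Z, Γ). -/
theorem complement_of_low_dimensional_AR_set_harnack_chain
    (n : ℕ) (d C₀ : ℝ) (hd₀ : 0 ≤ d) (hd : d < (n : ℝ) - 1) (hC₀ : 0 < C₀)
    (Γ : Set (EuclideanSpace ℝ (Fin n)))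
    (hAR : ∀ x ∈ Γ, ∀ r : ℝ, 0 < r → ENNReal.ofReal r < EMetric.diam Γ →
      ENNReal.ofReal (C₀⁻¹ * r ^ d) ≤ μH[d] (Γ ∩ ball x r) ∧
      μH[d] (Γ ∩ ball x r) ≤ ENNReal.ofReal (C₀ * r ^ d)) :
    ∃ C₁ : ℝ, 0 < C₁ ∧
      (∀ x ∈ Γ, ∀ r : ℝ, 0 < r → ENNReal.ofReal r < EMetric.diam Γ →
        ∃ A : EuclideanSpace ℝ (Fin n), A ∈ Γᶜ ∩ ball x r ∧ ball A (C₁⁻¹ * r) ⊆ Γᶜ) ∧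
      ∃ C₂ : ℕ,
        ∀ X Y : EuclideanSpace ℝ (Fin n), X ∈ Γᶜ → Y ∈ Γᶜ → ∀ r : ℝ, 0 < r →
          r ≤ Metric.infDist X Γ → r ≤ Metric.infDist Y Γ → dist X Y ≤ 7 * C₁ * r →
          ∃ Z : ℕ → EuclideanSpace ℝ (Fin n),
            Z 0 = X ∧ Z C₂ = Y ∧ (∀ i ≤ C₂, Z i ∈ Γᶜ) ∧
            ∀ i < C₂, dist (Z (i + 1)) (Z i) ≤ Metric.infDist (Z i) Γ / 2 := by
  have hn1 : (1:ℝ) < (n:ℝ) := by linarith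
  set B := CB n d C₀ with hB
  have hB1 : (1:ℝ) ≤ B := le_max_left _ _
  have hB0 : (0:ℝ) < B := lt_of_lt_of_le one_pos hB1
  have hnd : (0:ℝ) < (n:ℝ) - d := by linarith
  have hnd1 : (0:ℝ) < (n:ℝ) - 1 - d := by linarith
  set ε : ℝ := min (1/8) ((1/(B * 2^n * 2^n * 2)) ^ (((n:ℝ)-d)⁻¹)) with hε
  have hε0 : 0 < ε := lt_min (by norm_num) (Real.rpow_pos_of_pos (by positivity) _)
  have hε8 : ε ≤ 1/8 := min_le_left _ _
  have hkey1 : B * 2^n * ε ^ ((n:ℝ)-d) ≤ (1/2:ℝ)^n / 2 := by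
    have hεle : ε ≤ (1/(B * 2^n * 2^n * 2)) ^ (((n:ℝ)-d)⁻¹) := min_le_right _ _
    have h1 : ε ^ ((n:ℝ)-d) ≤ 1/(B * 2^n * 2^n * 2) := by
      have := Real.rpow_le_rpow hε0.le hεle hnd.le
      rwa [← Real.rpow_mul (by positivity), inv_mul_cancel₀ hnd.ne', Real.rpow_one] at this
    have h3 : B * 2^n * (1/(B * 2^n * 2^n * 2)) = (1/2:ℝ)^n/2 := by
      rw [div_pow, one_pow]
      field_simp
    calc B * 2^n * ε ^ ((n:ℝ)-d) ≤ B * 2^n * (1/(B * 2^n * 2^n * 2)) := by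
          exact mul_le_mul_of_nonneg_left h1 (by positivity)
      _ = (1/2:ℝ)^n/2 := h3
  set c : ℝ := min ε ((ε^(d+1) / (B * (8:ℝ)^d * 9 * 4^n * 2^n * 2)) ^ (((n:ℝ)-1-d)⁻¹)) with hc
  have h8d : (0:ℝ) < (8:ℝ)^d := Real.rpow_pos_of_pos (by norm_num) d
  have hεd1 : (0:ℝ) < ε^(d+1) := Real.rpow_pos_of_pos hε0 _
  have hc0 : 0 < c := lt_min hε0 (Real.rpow_pos_of_pos (by positivity) _)
  have hcε : c ≤ ε := min_le_left _ _
  have hkey2 : B * (8/(ε*c))^d * (9/(ε*c)) * (4*c)^n ≤ (1/2:ℝ)^n / 2 := by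
    set D : ℝ := B * (8:ℝ)^d * 9 * 4^n * 2^n * 2 with hD
    have hD0 : (0:ℝ) < D := by positivity
    have hcle : c ≤ (ε^(d+1) / D) ^ (((n:ℝ)-1-d)⁻¹) := min_le_right _ _
    have h1 : c ^ ((n:ℝ)-1-d) ≤ ε^(d+1)/D := by
      have := Real.rpow_le_rpow hc0.le hcle hnd1.le
      rwa [← Real.rpow_mul (by positivity), inv_mul_cancel₀ hnd1.ne', Real.rpow_one] at this
    have hεd : (0:ℝ) < ε^d := Real.rpow_pos_of_pos hε0 d
    have hcd : (0:ℝ) < c^d := Real.rpow_pos_of_pos hc0 d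
    have hg0 : (0:ℝ) < c ^ ((n:ℝ)-1-d) := Real.rpow_pos_of_pos hc0 _
    have e1 : (8/(ε*c))^d = (8:ℝ)^d / (ε^d * c^d) := by
      rw [Real.div_rpow (by norm_num) (by positivity) d, Real.mul_rpow hε0.le hc0.le]
    have e2 : (4*c)^n = 4^n * c^n := mul_pow _ _ _
    have e3 : (c:ℝ)^n = c^d * c * c^((n:ℝ)-1-d) := by
      have e3' : c^d * c * c^((n:ℝ)-1-d) = c ^ (d + 1 + ((n:ℝ)-1-d)) := by
        rw [Real.rpow_add hc0, Real.rpow_add hc0, Real.rpow_one]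
      rw [e3', show d + 1 + ((n:ℝ)-1-d) = ((n:ℕ):ℝ) by ring, Real.rpow_natCast]
    have e4 : ε^(d+1) = ε^d * ε := by rw [Real.rpow_add hε0, Real.rpow_one]
    have hLHS : B * (8/(ε*c))^d * (9/(ε*c)) * (4*c)^n
        = (B * (8:ℝ)^d * 9 * 4^n) * c^((n:ℝ)-1-d) / (ε^d * ε) := by
      rw [e1, e2, e3]
      field_simp
    rw [hLHS]
    have h2 : (B * (8:ℝ)^d * 9 * 4^n) * c^((n:ℝ)-1-d) ≤ (B * (8:ℝ)^d * 9 * 4^n) * (ε^(d+1)/D) :=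
      mul_le_mul_of_nonneg_left h1 (by positivity)
    have h3 : (B * (8:ℝ)^d * 9 * 4^n) * (ε^(d+1)/D) / (ε^d * ε) = (1/2:ℝ)^n/2 := by
      rw [e4, hD, div_pow, one_pow]
      field_simp
    calc (B * (8:ℝ)^d * 9 * 4^n) * c^((n:ℝ)-1-d) / (ε^d * ε)
        ≤ (B * (8:ℝ)^d * 9 * 4^n) * (ε^(d+1)/D) / (ε^d * ε) := by
          exact div_le_div_of_nonneg_right h2 (by positivity)
      _ = (1/2:ℝ)^n/2 := h3
  refine ⟨ε⁻¹, by positivity, ?_, ?_⟩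
  · -- corkscrew condition
    intro x hx r hr hrdiam
    exact corkscrew hd₀ hC₀ hAR hε0 hε8 hkey1 hx hr hrdiam
  · -- Harnack chains
    refine ⟨(⌊14/(ε*c)⌋₊ + 1) + 8, ?_⟩
    intro X Y hXc hYc r hr hX hY hXY
    have hΓne : Γ.Nonempty := by
      rcases Set.eq_empty_or_nonempty Γ with h | h
      · rw [h, Metric.infDist_empty] at hX
        linarith
      · exact h
    have hgt := exists_good_translation hd₀ hC₀ hAR hΓne hε0 hε8 hc0 hcε hkey2 X Y hr hXY
    exact chain_assembly hε0 hε8 hc0 hcε X Y hXc hYc r hr hX hY hXY hgt
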